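/- arXiv:2006.09587 — 2 statements merged into one kernel-verified Lean document; each statement's English description precedes it below -/
import Mathlib

section
/- Fix σ̲ > 0 and let s₁ ≥ s₂ ≥ … ≥ s_J > 0. Let A be a J×K real matrix and G_b a K×K symmetric positive definite matrix such that the singular values of A G_b^{1/2} are s₁^{-1} ≤ … ≤ s_J^{-1}. Let (U, W) satisfy E[U²|W] ≥ σ̲² a.s. and let b̃(W) ∈ ℝ^K satisfy E[b̃(W)b̃(W)'] = G_b^{-1/2} E[b(W)b(W)'] G_b^{-1/2} = I_K. Define v = ‖A G_b^{1/2} · G_b^{-1/2} E[U² b(W)b(W)'] G_b^{-1/2} · (A G_b^{1/2})'‖_F. Then v ≥ σ̲² (Σ_{j=1}^J s_j^{-4})^{1/2}. -/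
open MeasureTheory ProbabilityTheory Matrix

/-- Lower bound for the normalization factor: if `E[U²|W] ≥ σ̲²` a.s., the singular values of
`A G_b^{1/2}` are `s₁⁻¹ ≤ … ≤ s_J⁻¹`, and `E[b(W)b(W)'] = G_b`, then
`v = ‖A G_b^{1/2} · G_b^{-1/2} E[U² b b'] G_b^{-1/2} · (A G_b^{1/2})'‖_F ≥ σ̲² (Σ_j s_j⁻⁴)^{1/2}`. -/
theorem frobenius_lower_bound_variance {Ω β : Type*} [MeasurableSpace Ω] [MeasurableSpace β]
    (μ : Measure Ω) [IsProbabilityMeasure μ]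
    (J K : ℕ) (U : Ω → ℝ) (W : Ω → β) (b : β → Fin K → ℝ)
    (hU : Measurable U) (hW : Measurable W) (hb : ∀ k, Measurable fun x => b x k)
    (σlow : ℝ) (hσ : 0 < σlow)
    (hcond : ∀ᵐ ω ∂μ,
      σlow ^ 2 ≤ (μ[fun ω' => (U ω') ^ 2 | MeasurableSpace.comap W inferInstance]) ω)
    (A : Matrix (Fin J) (Fin K) ℝ) (Gbh : Matrix (Fin K) (Fin K) ℝ)
    (hGbhsymm : Gbh.IsSymm) (hGbpd : (Gbh * Gbh).PosDef)
    (s : Fin J → ℝ) (hspos : ∀ j, 0 < s j)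
    (hmono : ∀ j j' : Fin J, j ≤ j' → s j' ≤ s j)
    (hQ : ∃ Q : Matrix (Fin J) (Fin J) ℝ, Q * Qᵀ = 1 ∧ Qᵀ * Q = 1 ∧
      Qᵀ * (A * (Gbh * Gbh) * Aᵀ) * Q = Matrix.diagonal fun j => ((s j) ^ 2)⁻¹)
    (hGb : ∀ j l, ∫ ω, b (W ω) j * b (W ω) l ∂μ = (Gbh * Gbh) j l)
    (hint : ∀ j l, Integrable (fun ω => (U ω) ^ 2 * (b (W ω) j * b (W ω) l)) μ)
    (Sig : Matrix (Fin K) (Fin K) ℝ)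
    (hSig : ∀ j l, Sig j l = ∫ ω, (U ω) ^ 2 * (b (W ω) j * b (W ω) l) ∂μ) :
    σlow ^ 2 * Real.sqrt (∑ j, ((s j) ^ 4)⁻¹) ≤
      Real.sqrt (∑ j, ∑ l,
        (((A * Gbh) * (Gbh⁻¹ * Sig * Gbh⁻¹) * (A * Gbh)ᵀ) j l) ^ 2) := by
  classical
  obtain ⟨Q, hQQ, hQtQ, hdiag⟩ := hQ
  have hm : MeasurableSpace.comap W inferInstance ≤ ‹MeasurableSpace Ω› := hW.comap_le
  set m : MeasurableSpace Ω := MeasurableSpace.comap W inferInstance with hm_def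
  -- U² is integrable (else condexp = 0, contradicting hcond)
  have hU2 : Integrable (fun ω => U ω ^ 2) μ := by
    by_contra h
    have h0 : μ[fun ω' => (U ω') ^ 2 | m] = 0 := condExp_of_not_integrable h
    rw [h0] at hcond
    obtain ⟨ω, hω⟩ := hcond.exists
    simp only [Pi.zero_apply] at hω
    exact absurd hω (not_le.2 (pow_pos hσ 2))
  -- positivity of diagonal entries of G
  have hGdiag_pos : ∀ j, 0 < (Gbh * Gbh) j j := by
    intro j
    have hx : (Pi.single j 1 : Fin K → ℝ) ≠ 0 := by
      intro h
      have := congrFun h j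
      simp at this
    have := hGbpd.dotProduct_mulVec_pos hx
    simpa [dotProduct, Matrix.mulVec, Pi.single_apply, Finset.mul_sum] using this
  -- integrability of products b_j b_l
  have hsq : ∀ j, Integrable (fun ω => b (W ω) j * b (W ω) j) μ := by
    intro j
    by_contra h
    have h0 : ∫ ω, b (W ω) j * b (W ω) j ∂μ = 0 := integral_undef h
    rw [hGb j j] at h0
    exact (hGdiag_pos j).ne' h0
  have hbb_int : ∀ j l, Integrable (fun ω => b (W ω) j * b (W ω) l) μ := by
    intro j l
    refine Integrable.mono ((hsq j).add (hsq l)) ?_ ?_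
    · exact (((hb j).comp hW).mul ((hb l).comp hW)).aestronglyMeasurable
    · refine Filter.Eventually.of_forall fun ω => ?_
      set x := b (W ω) j; set y := b (W ω) l
      have h1 : |x * y| ≤ x * x + y * y := by
        rw [abs_mul]
        nlinarith [sq_nonneg (|x| - |y|), sq_abs x, sq_abs y, abs_nonneg x, abs_nonneg y]
      calc ‖x * y‖ = |x * y| := rfl
        _ ≤ x * x + y * y := h1
        _ ≤ |x * x + y * y| := le_abs_self _
        _ = ‖x * x + y * y‖ := rfl
  -- measurability of b_k ∘ W with respect to m
  have hWm : Measurable[m] W := Measurable.of_comap_le le_rfl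
  have hbm : ∀ k, Measurable[m] fun ω => b (W ω) k := fun k => (hb k).comp hWm
  -- the key quadratic form inequality
  have key : ∀ y : Fin K → ℝ,
      σlow ^ 2 * (∑ k, ∑ l, y k * (Gbh * Gbh) k l * y l) ≤
        ∑ k, ∑ l, y k * Sig k l * y l := by
    intro y
    set g : Ω → ℝ := fun ω => (∑ k, y k * b (W ω) k) ^ 2 with hg_def
    have hg_expand : ∀ ω, g ω = ∑ k, ∑ l, y k * y l * (b (W ω) k * b (W ω) l) := by
      intro ω
      simp only [hg_def]
      rw [sq, Finset.sum_mul_sum]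
      exact Finset.sum_congr rfl fun k _ => Finset.sum_congr rfl fun l _ => by ring
    have hg_eq : g = fun ω => ∑ k, ∑ l, y k * y l * (b (W ω) k * b (W ω) l) :=
      funext hg_expand
    have hg_int : Integrable g μ := by
      rw [hg_eq]
      exact integrable_finset_sum _ fun k _ =>
        integrable_finset_sum _ fun l _ => ((hbb_int k l).const_mul _)
    have hg_nonneg : ∀ ω, 0 ≤ g ω := fun ω => sq_nonneg _
    have hg_integral : ∫ ω, g ω ∂μ = ∑ k, ∑ l, y k * (Gbh * Gbh) k l * y l := by
      rw [hg_eq, integral_finset_sum _ fun k _ =>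
        integrable_finset_sum _ fun l _ => ((hbb_int k l).const_mul _)]
      refine Finset.sum_congr rfl fun k _ => ?_
      rw [integral_finset_sum _ fun l _ => ((hbb_int k l).const_mul _)]
      refine Finset.sum_congr rfl fun l _ => ?_
      rw [integral_const_mul, hGb k l]; ring
    have hgU_int : Integrable (fun ω => g ω * U ω ^ 2) μ := by
      have : (fun ω => g ω * U ω ^ 2) =
          fun ω => ∑ k, ∑ l, y k * y l * (U ω ^ 2 * (b (W ω) k * b (W ω) l)) := by
        funext ω
        rw [hg_expand ω, Finset.sum_mul]
        refine Finset.sum_congr rfl fun k _ => ?_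
        rw [Finset.sum_mul]
        exact Finset.sum_congr rfl fun l _ => by ring
      rw [this]
      exact integrable_finset_sum _ fun k _ =>
        integrable_finset_sum _ fun l _ => ((hint k l).const_mul _)
    have hgU_integral : ∫ ω, g ω * U ω ^ 2 ∂μ = ∑ k, ∑ l, y k * Sig k l * y l := by
      have hfe : (fun ω => g ω * U ω ^ 2) =
          fun ω => ∑ k, ∑ l, y k * y l * (U ω ^ 2 * (b (W ω) k * b (W ω) l)) := by
        funext ω
        rw [hg_expand ω, Finset.sum_mul]
        refine Finset.sum_congr rfl fun k _ => ?_
        rw [Finset.sum_mul]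
        exact Finset.sum_congr rfl fun l _ => by ring
      rw [hfe, integral_finset_sum _ fun k _ =>
        integrable_finset_sum _ fun l _ => ((hint k l).const_mul _)]
      refine Finset.sum_congr rfl fun k _ => ?_
      rw [integral_finset_sum _ fun l _ => ((hint k l).const_mul _)]
      refine Finset.sum_congr rfl fun l _ => ?_
      rw [integral_const_mul, hSig k l]; ring
    -- strong measurability of g with respect to m
    have hg_sm : StronglyMeasurable[m] g := by
      have : Measurable[m] g := by
        rw [hg_eq]
        exact Finset.measurable_sum _ fun k _ =>
          Finset.measurable_sum _ fun l _ => (((hbm k).mul (hbm l)).const_mul _)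
      exact this.stronglyMeasurable
    -- pull-out property
    have hpull : μ[g * (fun ω => U ω ^ 2)|m] =ᵐ[μ] g * μ[fun ω => U ω ^ 2|m] :=
      condExp_mul_of_stronglyMeasurable_left hg_sm (by exact hgU_int) hU2
    have hE_int : Integrable (g * μ[fun ω => U ω ^ 2|m]) μ :=
      (integrable_condExp).congr hpull
    calc σlow ^ 2 * (∑ k, ∑ l, y k * (Gbh * Gbh) k l * y l)
        = ∫ ω, g ω * σlow ^ 2 ∂μ := by
          rw [integral_mul_const, hg_integral]; ring
      _ ≤ ∫ ω, (g * μ[fun ω' => U ω' ^ 2|m]) ω ∂μ := by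
          refine integral_mono_ae (hg_int.mul_const _) hE_int ?_
          filter_upwards [hcond] with ω hω
          exact mul_le_mul_of_nonneg_left hω (hg_nonneg ω)
      _ = ∫ ω, (g * fun ω' => U ω' ^ 2) ω ∂μ := by
          rw [← integral_condExp hm (μ := μ) (f := g * fun ω' => U ω' ^ 2)]
          exact (integral_congr_ae hpull).symm
      _ = ∑ k, ∑ l, y k * Sig k l * y l := hgU_integral
  -- Gbh is invertible
  have hdetG : IsUnit Gbh.det := by
    have hpos : 0 < (Gbh * Gbh).det := hGbpd.det_pos
    rw [Matrix.det_mul] at hpos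
    have : Gbh.det ≠ 0 := by
      intro h; rw [h] at hpos; simp at hpos
    exact this.isUnit
  have h1 : Gbh * Gbh⁻¹ = 1 := Matrix.mul_nonsing_inv _ hdetG
  have h2 : Gbh⁻¹ * Gbh = 1 := Matrix.nonsing_inv_mul _ hdetG
  -- simplify the matrix in the statement
  have hMsimp : (A * Gbh) * (Gbh⁻¹ * Sig * Gbh⁻¹) * (A * Gbh)ᵀ = A * Sig * Aᵀ := by
    have hT : (A * Gbh)ᵀ = Gbh * Aᵀ := by
      rw [Matrix.transpose_mul, hGbhsymm]
    rw [hT]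
    have hmid : Gbh * (Gbh⁻¹ * (Sig * (Gbh⁻¹ * (Gbh * Aᵀ)))) = Sig * Aᵀ := by
      rw [← Matrix.mul_assoc Gbh, h1, Matrix.one_mul, ← Matrix.mul_assoc Gbh⁻¹, h2,
        Matrix.one_mul]
    simp only [Matrix.mul_assoc]
    rw [hmid]
  set M : Matrix (Fin J) (Fin J) ℝ := A * Sig * Aᵀ with hM_def
  set N : Matrix (Fin J) (Fin J) ℝ := Qᵀ * M * Q with hN_def
  -- Frobenius norm invariance
  have htr : ∀ P : Matrix (Fin J) (Fin J) ℝ,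
      ∑ j, ∑ l, (P j l) ^ 2 = Matrix.trace (Pᵀ * P) := by
    intro P
    simp only [Matrix.trace, Matrix.diag, Matrix.mul_apply, Matrix.transpose_apply, sq]
    exact Finset.sum_comm
  have hfrob : ∑ j, ∑ l, (N j l) ^ 2 = ∑ j, ∑ l, (M j l) ^ 2 := by
    rw [htr, htr]
    have hNT : Nᵀ * N = Qᵀ * (Mᵀ * M) * Q := by
      rw [hN_def]
      simp only [Matrix.transpose_mul, Matrix.transpose_transpose, Matrix.mul_assoc]
      rw [← Matrix.mul_assoc Q Qᵀ (M * Q), hQQ, Matrix.one_mul]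
    rw [hNT, Matrix.trace_mul_comm (Qᵀ * (Mᵀ * M)) Q, ← Matrix.mul_assoc, hQQ,
      Matrix.one_mul]
  -- entrywise formula for quadratic forms
  have hentry : ∀ (X : Matrix (Fin K) (Fin K) ℝ) (B : Matrix (Fin J) (Fin K) ℝ) (j : Fin J),
      (B * X * Bᵀ) j j = ∑ k, ∑ l, B j k * X k l * B j l := by
    intro X B j
    simp only [Matrix.mul_apply, Matrix.transpose_apply, Finset.sum_mul]
    exact Finset.sum_comm
  -- diagonal entries of N are bounded below
  have hNdiag : ∀ j, σlow ^ 2 * ((s j) ^ 2)⁻¹ ≤ N j j := by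
    intro j
    have hN_eq : N = (Qᵀ * A) * Sig * (Qᵀ * A)ᵀ := by
      rw [hN_def, hM_def]
      simp only [Matrix.transpose_mul, Matrix.transpose_transpose, Matrix.mul_assoc]
    have hG_eq : Qᵀ * (A * (Gbh * Gbh) * Aᵀ) * Q = (Qᵀ * A) * (Gbh * Gbh) * (Qᵀ * A)ᵀ := by
      simp only [Matrix.transpose_mul, Matrix.transpose_transpose, Matrix.mul_assoc]
    have hk := key (fun k => (Qᵀ * A) j k)
    rw [← hentry Sig (Qᵀ * A) j, ← hN_eq] at hk
    rw [← hentry (Gbh * Gbh) (Qᵀ * A) j, ← hG_eq, hdiag] at hk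
    simpa [Matrix.diagonal_apply_eq] using hk
  -- combine
  have hsum : σlow ^ 4 * (∑ j, ((s j) ^ 4)⁻¹) ≤ ∑ j, ∑ l, (M j l) ^ 2 := by
    rw [← hfrob]
    calc σlow ^ 4 * (∑ j, ((s j) ^ 4)⁻¹) = ∑ j, (σlow ^ 2 * ((s j) ^ 2)⁻¹) ^ 2 := by
          rw [Finset.mul_sum]
          refine Finset.sum_congr rfl fun j _ => ?_
          simp only [mul_pow, inv_pow, ← pow_mul]
      _ ≤ ∑ j, (N j j) ^ 2 := by
          refine Finset.sum_le_sum fun j _ => ?_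
          have h0 : 0 ≤ σlow ^ 2 * ((s j) ^ 2)⁻¹ :=
            mul_nonneg (sq_nonneg _) (inv_nonneg.2 (sq_nonneg _))
          exact pow_le_pow_left₀ h0 (hNdiag j) 2
      _ ≤ ∑ j, ∑ l, (N j l) ^ 2 := by
          refine Finset.sum_le_sum fun j _ => ?_
          exact Finset.single_le_sum (f := fun l => (N j l) ^ 2)
            (fun l _ => sq_nonneg _) (Finset.mem_univ j)
  rw [hMsimp]
  have hLHS : σlow ^ 2 * Real.sqrt (∑ j, ((s j) ^ 4)⁻¹) =
      Real.sqrt (σlow ^ 4 * ∑ j, ((s j) ^ 4)⁻¹) := by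
    rw [show σlow ^ 4 = (σlow ^ 2) ^ 2 by ring, Real.sqrt_mul (sq_nonneg _),
      Real.sqrt_sq (sq_nonneg _)]
  rw [hLHS]
  exact Real.sqrt_le_sqrt hsum
end

section
/- Let q(a, k) denote the upper a-quantile of the chi-square distribution with k degrees of freedom, i.e., P(χ²_k > q(a,k)) = a. Then for all k ≥ 1 and all a ∈ (0,1), q(a, k) ≤ k + 2√(k·log(1/a)) + 2·log(1/a). -/
open MeasureTheory ProbabilityTheory Real Set
open scoped ENNReal NNReal

lemma LM_gamma_chernoff {α c B : ℝ} (hα : 0 < α) (hc : 0 < c) (hc2 : c ≤ 1/2) (hB : 0 ≤ B) :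
    gammaMeasure α (1/2) {x | B < x}
      ≤ ENNReal.ofReal (Real.exp (-((1/2 - c) * B)) * (1/(2*c)) ^ α) := by
  have hlam : (0:ℝ) ≤ 1/2 - c := by linarith
  set g : ℝ → ℝ := fun x => (1/2:ℝ) ^ α / Gamma α * x ^ (α - 1) * Real.exp (-(c * x)) with hg
  have hgmeas : Measurable fun x => ENNReal.ofReal (g x) := by
    apply Measurable.ennreal_ofReal
    exact (((measurable_id'.pow_const _).const_mul _).mul (measurable_id'.const_mul _).neg.exp)
  have step1 : gammaMeasure α (1/2) {x | B < x} = ∫⁻ x in Ioi B, gammaPDF α (1/2) x := by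
    show (MeasureTheory.volume.withDensity (gammaPDF α (1/2))) (Ioi B) = _
    rw [withDensity_apply _ measurableSet_Ioi]
  have step2 : ∫⁻ x in Ioi B, gammaPDF α (1/2) x
      ≤ ∫⁻ x in Ioi B, ENNReal.ofReal (Real.exp (-((1/2 - c) * B)) * g x) := by
    refine setLIntegral_mono' measurableSet_Ioi fun x hx => ?_
    have hx0 : (0:ℝ) ≤ x := le_trans hB (le_of_lt hx)
    rw [gammaPDF_of_nonneg hx0]
    apply ENNReal.ofReal_le_ofReal
    have : Real.exp (-((1/2 - c) * B)) * g x
        = Real.exp ((1/2 - c) * (x - B)) * ((1/2:ℝ) ^ α / Gamma α * x ^ (α - 1)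
            * Real.exp (-(1/2 * x))) := by
      simp only [hg]
      rw [show Real.exp ((1/2 - c) * (x - B)) = Real.exp (-((1/2 - c) * B)) * Real.exp ((1/2-c)*x) by
            rw [← Real.exp_add]; ring_nf]
      rw [show Real.exp (-(c*x)) = Real.exp ((1/2-c)*x) * Real.exp (-(1/2*x)) by
            rw [← Real.exp_add]; ring_nf]
      ring
    rw [this]
    have h1 : (1:ℝ) ≤ Real.exp ((1/2 - c) * (x - B)) :=
      Real.one_le_exp (by nlinarith [le_of_lt (mem_Ioi.mp hx)])
    nlinarith [h1, mul_nonneg (mul_nonneg (by positivity : (0:ℝ) ≤ (1/2:ℝ)^α / Gamma α)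
      (Real.rpow_nonneg hx0 (α-1))) (Real.exp_nonneg (-(1/2*x)))]
  have step3 : ∫⁻ x in Ioi B, ENNReal.ofReal (Real.exp (-((1/2 - c) * B)) * g x)
      ≤ ∫⁻ x in Ioi 0, ENNReal.ofReal (Real.exp (-((1/2 - c) * B)) * g x) :=
    lintegral_mono_set (Ioi_subset_Ioi hB)
  have hint : IntegrableOn (fun x : ℝ => x ^ (α - 1) * Real.exp (-(c * x))) (Ioi 0) := by
    have := integrableOn_rpow_mul_exp_neg_mul_rpow (p := 1) (s := α - 1) (b := c)
      (by linarith) zero_lt_one hc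
    simpa [Real.rpow_one, neg_mul] using this
  have hintg : IntegrableOn g (Ioi 0) := by
    have := hint.const_mul ((1/2:ℝ) ^ α / Gamma α)
    simpa [hg, mul_assoc, IntegrableOn] using this
  have step4 : ∫⁻ x in Ioi 0, ENNReal.ofReal (g x) = ENNReal.ofReal ((1/(2*c)) ^ α) := by
    rw [← ofReal_integral_eq_lintegral_ofReal hintg]
    · congr 1
      simp only [hg, mul_assoc]
      rw [integral_const_mul, integral_rpow_mul_exp_neg_mul_Ioi hα hc,
        show (1/(2*c):ℝ) = 1/2 * (1/c) by field_simp,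
        Real.mul_rpow (by norm_num) (by positivity)]
      have hG : Gamma α ≠ 0 := (Real.Gamma_pos_of_pos hα).ne'
      field_simp
    · filter_upwards [ae_restrict_mem measurableSet_Ioi] with x hx
      have hx0 : (0:ℝ) < x := hx
      simp only [hg, Pi.zero_apply]
      positivity
  calc gammaMeasure α (1/2) {x | B < x}
      ≤ ∫⁻ x in Ioi 0, ENNReal.ofReal (Real.exp (-((1/2 - c) * B)) * g x) := by
        rw [step1]; exact le_trans step2 step3
    _ = ENNReal.ofReal (Real.exp (-((1/2 - c) * B))) * ∫⁻ x in Ioi 0, ENNReal.ofReal (g x) := by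
        simp_rw [ENNReal.ofReal_mul (Real.exp_nonneg _)]
        rw [lintegral_const_mul _ hgmeas]
    _ = ENNReal.ofReal (Real.exp (-((1/2 - c) * B)) * (1/(2*c)) ^ α) := by
        rw [step4, ← ENNReal.ofReal_mul (Real.exp_nonneg _)]

/-- Laurent–Massart bound on chi-square quantiles: if `q = q(a,k)` is the upper `a`-quantile
of the chi-square distribution with `k` degrees of freedom (i.e. `P(χ²_k > q) = a`), then
`q ≤ k + 2√(k log(1/a)) + 2 log(1/a)`. The chi-square distribution with `k` degrees of
freedom is the Gamma distribution with shape `k/2` and rate `1/2`. -/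
theorem chiSq_quantile_upper_bound (k : ℕ) (hk : 1 ≤ k)
    (a : ℝ) (ha : a ∈ Set.Ioo (0 : ℝ) 1) (q : ℝ)
    (hq : gammaMeasure ((k : ℝ) / 2) (1 / 2) {x | q < x} = ENNReal.ofReal a) :
    q ≤ (k : ℝ) + 2 * Real.sqrt (k * Real.log (1 / a)) + 2 * Real.log (1 / a) := by
  obtain ⟨ha0, ha1⟩ := ha
  have hk0 : (0:ℝ) < k := by exact_mod_cast hk
  set t := Real.log (1 / a) with ht
  have ht0 : 0 < t := Real.log_pos (by rw [lt_div_iff₀ ha0]; linarith)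
  set s := Real.sqrt t with hs
  set r := Real.sqrt k with hr
  have hs0 : 0 < s := Real.sqrt_pos.mpr ht0
  have hr0 : 0 < r := Real.sqrt_pos.mpr hk0
  have hr2 : r ^ 2 = k := Real.sq_sqrt hk0.le
  have hs2 : s ^ 2 = t := Real.sq_sqrt ht0.le
  have hkt : Real.sqrt (k * t) = r * s := Real.sqrt_mul hk0.le t ▸ rfl
  set z := 2 * r * s + 2 * s ^ 2 with hz
  have hz0 : 0 < z := by positivity
  set B := (k:ℝ) + z with hB
  have hBeq : B = (k : ℝ) + 2 * Real.sqrt (k * t) + 2 * t := by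
    rw [hB, hz, hkt, ← hs2]; ring
  rw [← hBeq]
  by_contra hqB
  push_neg at hqB
  -- Chernoff bound at B
  set c := (k:ℝ) / (2 * ((k:ℝ) + z)) with hc
  have hc0 : 0 < c := by positivity
  have hc2 : c ≤ 1/2 := by
    rw [hc, div_le_iff₀ (by positivity)]; nlinarith
  have hα : (0:ℝ) < (k:ℝ)/2 := by positivity
  have hcher := LM_gamma_chernoff (α := (k:ℝ)/2) (c := c) (B := B) hα hc0 hc2 (by positivity)
  -- numeric bound: exp(-((1/2-c)*B)) * (1/(2c))^(k/2) ≤ a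
  have hnum : Real.exp (-((1/2 - c) * B)) * (1/(2*c)) ^ ((k:ℝ)/2) ≤ a := by
    have h1 : (1/2 - c) * B = z / 2 := by
      rw [hc]; field_simp; ring
    have h2 : (1:ℝ)/(2*c) = ((k:ℝ) + z)/k := by
      rw [hc]; field_simp
    have hv : ((k:ℝ) + z)/k = 1 + 2*(s/r) + 2*(s/r)^2 := by
      rw [← hr2, hz]; field_simp; ring
    have hle : ((k:ℝ) + z)/k ≤ Real.exp (2 * (s/r)) := by
      rw [hv]
      calc 1 + 2*(s/r) + 2*(s/r)^2 = 1 + (2*(s/r)) + (2*(s/r))^2/2 := by ring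
        _ ≤ Real.exp (2*(s/r)) := Real.quadratic_le_exp_of_nonneg (by positivity)
    have hpow : (((k:ℝ) + z)/k) ^ ((k:ℝ)/2) ≤ Real.exp (2*(s/r)) ^ ((k:ℝ)/2) :=
      Real.rpow_le_rpow (by positivity) hle (by positivity)
    have hexp : Real.exp (2*(s/r)) ^ ((k:ℝ)/2) = Real.exp (r * s) := by
      rw [← Real.exp_mul]
      congr 1
      rw [← hr2]; field_simp
    have ha' : a = Real.exp (-t) := by
      rw [ht, Real.log_div one_ne_zero ha0.ne', Real.log_one]
      simp [Real.exp_log ha0]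
    rw [h1, h2, ha']
    calc Real.exp (-(z/2)) * (((k:ℝ) + z)/k) ^ ((k:ℝ)/2)
        ≤ Real.exp (-(z/2)) * Real.exp (r * s) := by
          have := hpow.trans_eq hexp
          nlinarith [Real.exp_pos (-(z/2)), this,
            Real.rpow_nonneg (by positivity : (0:ℝ) ≤ ((k:ℝ)+z)/k) ((k:ℝ)/2)]
      _ = Real.exp (-(z/2) + r*s) := (Real.exp_add _ _).symm
      _ = Real.exp (-t) := by rw [hz, ← hs2]; ring_nf
  have hμB : gammaMeasure ((k:ℝ)/2) (1/2) {x | B < x} ≤ ENNReal.ofReal a :=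
    hcher.trans (ENNReal.ofReal_le_ofReal hnum)
  -- decomposition
  have hsplit : gammaMeasure ((k:ℝ)/2) (1/2) {x | B < x}
      = gammaMeasure ((k:ℝ)/2) (1/2) (Ioc B q) + gammaMeasure ((k:ℝ)/2) (1/2) {x | q < x} := by
    have : {x : ℝ | B < x} = Ioc B q ∪ Ioi q := by
      rw [Ioc_union_Ioi_eq_Ioi hqB.le]; rfl
    rw [this, measure_union Set.Ioc_disjoint_Ioi_same measurableSet_Ioi]
    rfl
  -- positivity of the middle piece
  have hpos : 0 < gammaMeasure ((k:ℝ)/2) (1/2) (Ioc B q) := by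
    have hmeas : gammaMeasure ((k:ℝ)/2) (1/2) (Ioc B q)
        = ∫⁻ x in Ioc B q, gammaPDF ((k:ℝ)/2) (1/2) x := by
      rw [gammaMeasure, withDensity_apply _ measurableSet_Ioc]
    rw [hmeas, setLIntegral_pos_iff (f := gammaPDF ((k:ℝ)/2) (1/2)) ((measurable_gammaPDFReal _ _).ennreal_ofReal)]
    have hsub : Ioc B q ⊆ Function.support (gammaPDF ((k:ℝ)/2) (1/2)) ∩ Ioc B q := by
      intro x hx
      refine ⟨?_, hx⟩
      have hx0 : 0 < x := lt_of_le_of_lt (by positivity : (0:ℝ) ≤ B) hx.1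
      simp only [Function.mem_support, gammaPDF, ne_eq, ENNReal.ofReal_eq_zero, not_le]
      exact gammaPDFReal_pos hα one_half_pos hx0
    calc (0:ℝ≥0∞) < ENNReal.ofReal (q - B) := by
          rw [ENNReal.ofReal_pos]; linarith
      _ = MeasureTheory.volume (Ioc B q) := (Real.volume_Ioc).symm
      _ ≤ _ := measure_mono hsub
  rw [hsplit, hq] at hμB
  nth_rewrite 2 [← zero_add (ENNReal.ofReal a)] at hμB
  have hle0 := (ENNReal.add_le_add_iff_right ENNReal.ofReal_ne_top).mp hμB
  exact absurd (le_antisymm hle0 (by simp)) hpos.ne'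
end
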